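/- Let (u_n) be a decreasing sequence of real numbers and α, β, p > 0. If for all k ≤ n we have u_k − u_{k+1} ≤ α + β e^{p u_{k+1}}, then for all k ≤ n: (α / (α + β e^{p u_0}))^{1/p} · e^{−α k} ≤ e^{u_k − u_0}. -/

import Mathlib

/-- Corollary `cor2`. If `(u_n)` is decreasing, `α, β, p > 0`, and
`u_k − u_{k+1} ≤ α + β e^{p u_{k+1}}` for all `k ≤ n`, then for all `k ≤ n`:
`(α/(α + β e^{p u_0}))^{1/p} e^{−αk} ≤ e^{u_k − u_0}`. -/
theorem stmt3 (u : ℕ → ℝ) (hu : Antitone u) (α β p : ℝ)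
    (hα : 0 < α) (hβ : 0 < β) (hp : 0 < p) (n : ℕ)
    (h : ∀ k ≤ n, u k - u (k + 1) ≤ α + β * Real.exp (p * u (k + 1))) :
    ∀ k ≤ n,
      (α / (α + β * Real.exp (p * u 0))) ^ ((1 : ℝ) / p) * Real.exp (-α * k) ≤
        Real.exp (u k - u 0) := by
  have hDpos : ∀ x : ℝ, 0 < α + β * Real.exp (p * x) := fun x => by positivity
  -- Step lemma
  have step : ∀ a b : ℝ, a ≤ b → b - a ≤ α + β * Real.exp (p * a) →
      b - a - (1/p) * (Real.log (α + β * Real.exp (p * b)) -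
        Real.log (α + β * Real.exp (p * a))) ≤ α := by
    intro a b hab hba
    set Da := α + β * Real.exp (p * a) with hDa
    set Db := α + β * Real.exp (p * b) with hDb
    have hDa0 : 0 < Da := hDpos a
    have hDb0 : 0 < Db := hDpos b
    set s : ℝ := β * Real.exp (p * a) / Da with hs
    set t : ℝ := p * (b - a) with ht
    have hs0 : 0 ≤ s := by positivity
    have hs1 : s ≤ 1 := by
      rw [hs, div_le_one hDa0, hDa]; linarith
    have ht0 : 0 ≤ t := mul_nonneg hp.le (sub_nonneg.2 hab)
    have hconv : Real.exp (s * t) ≤ 1 + s * (Real.exp t - 1) := by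
      have := convexOn_exp.2 (Set.mem_univ (0:ℝ)) (Set.mem_univ t)
        (by linarith : (0:ℝ) ≤ 1 - s) hs0 (by ring)
      simp only [smul_eq_mul, mul_zero, zero_add, Real.exp_zero, mul_one] at this
      linarith
    have hsDa : s * Da = β * Real.exp (p * a) := by
      rw [hs, div_mul_cancel₀ _ (ne_of_gt hDa0)]
    have hexpb : Real.exp (p * b) = Real.exp (p * a) * Real.exp t := by
      rw [← Real.exp_add, ht]; ring_nf
    have hDbeq : Db = Da * (1 + s * (Real.exp t - 1)) := by
      rw [hDb, hexpb, hs, hDa]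
      field_simp
      ring
    have hratio : Real.exp (s * t) ≤ Db / Da := by
      rw [hDbeq, mul_div_cancel_left₀ _ (ne_of_gt hDa0)]
      exact hconv
    have hlog : s * t ≤ Real.log Db - Real.log Da := by
      have h1 : Real.log (Real.exp (s * t)) ≤ Real.log (Db / Da) :=
        Real.log_le_log (Real.exp_pos _) hratio
      rwa [Real.log_exp, Real.log_div (ne_of_gt hDb0) (ne_of_gt hDa0)] at h1
    -- conclude
    have hinvp : 0 < 1 / p := by positivity
    have h2 : (1/p) * (s * t) ≤ (1/p) * (Real.log Db - Real.log Da) :=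
      mul_le_mul_of_nonneg_left hlog hinvp.le
    have h3 : (1/p) * (s * t) = s * (b - a) := by
      rw [ht]; field_simp
    have h4 : (1 - s) * (b - a) ≤ (1 - s) * Da :=
      mul_le_mul_of_nonneg_left hba (by linarith)
    have h5 : (1 - s) * Da = α := by
      rw [sub_mul, one_mul, hsDa, hDa]; ring
    nlinarith
  -- Telescoping by induction
  have main : ∀ k, k ≤ n →
      u 0 - u k - (1/p) * (Real.log (α + β * Real.exp (p * u 0)) -
        Real.log (α + β * Real.exp (p * u k))) ≤ α * k := by
    intro k
    induction k with
    | zero => intro _; simp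
    | succ m ih =>
      intro hm
      have hm' : m ≤ n := Nat.le_of_succ_le hm
      have h1 := ih hm'
      have h2 := step (u (m+1)) (u m) (hu (Nat.le_succ m)) (h m hm')
      push_cast
      linarith
  intro k hk
  have hm := main k hk
  have hlogk : Real.log α ≤ Real.log (α + β * Real.exp (p * u k)) :=
    Real.log_le_log hα (by nlinarith [Real.exp_pos (p * u k)])
  have hinvp : 0 < 1 / p := by positivity
  have h6 : (1/p) * (Real.log (α + β * Real.exp (p * u 0)) -
      Real.log (α + β * Real.exp (p * u k))) ≤
      (1/p) * (Real.log (α + β * Real.exp (p * u 0)) - Real.log α) :=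
    mul_le_mul_of_nonneg_left (by linarith) hinvp.le
  have hdivpos : 0 < α / (α + β * Real.exp (p * u 0)) := div_pos hα (hDpos _)
  rw [Real.rpow_def_of_pos hdivpos, ← Real.exp_add, Real.exp_le_exp,
    Real.log_div (ne_of_gt hα) (ne_of_gt (hDpos _))]
  have : (Real.log α - Real.log (α + β * Real.exp (p * u 0))) * (1/p) =
      -((1/p) * (Real.log (α + β * Real.exp (p * u 0)) - Real.log α)) := by ring
  linarith [h6, hm, this.le, this.ge]
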